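/- In the rally-point system with first server A, the probability of reaching α points for A and β points for B with A scoring last equals p_a^α p_b^β ∑_{r=min(β,1)}^{min(α,β)} C(α,r) C(β-1,r-1) (t_a t_b)^r, where t_a = (1-p_a)/p_a and t_b = (1-p_b)/p_b. -/

import Mathlib

open scoped BigOperators
open Filter

/-- Rally-point scoring: a trajectory is the list of rally winners (`true` = player A);
every rally scores a point for its winner, and the winner serves the next rally.
The first argument is the current server. -/
def rpWeight (pa pb : ℝ) : Bool → List Bool → ℝ
  | _, [] => 1
  | srv, w :: rest =>
      (if srv then (if w then pa else 1 - pa) else (if w then 1 - pb else pb)) *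
        rpWeight pa pb w rest

/-- Points scored by player A. -/
def rpScoreA (g : List Bool) : ℕ := g.count true

/-- Points scored by player B. -/
def rpScoreB (g : List Bool) : ℕ := g.count false

/-- A scores the last point. -/
def rpLastA (g : List Bool) : Prop := g.getLast? = some true

/-- B scores the last point. -/
def rpLastB (g : List Bool) : Prop := g.getLast? = some false

/-- Number of maximal runs of `false` in a list, the first argument being the previous value. -/
def falseRuns : Bool → List Bool → ℕ
  | _, [] => 0
  | prev, b :: rest => (if prev && !b then 1 else 0) + falseRuns b rest

/-- Number of A-interruptions: maximal blocks of consecutive points scored by B. -/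
def rpInter (g : List Bool) : ℕ := falseRuns true g

/-- Probability of a set of trajectories in the rally-point model, first server A. -/
noncomputable def rpPr (pa pb : ℝ) (E : Set (List Bool)) : ℝ :=
  ∑' g : List Bool, Set.indicator E (rpWeight pa pb true) g

/-- Conditional expectation of `f` given the event `E` in the rally-point model, first server A. -/
noncomputable def rpCondExp (pa pb : ℝ) (E : Set (List Bool)) (f : List Bool → ℝ) : ℝ :=
  (∑' g : List Bool, Set.indicator E (fun g => rpWeight pa pb true g * f g) g) / rpPr pa pb E

namespace Stmt13

lemma rpWeight_cons_true (pa pb : ℝ) (s : Bool) (l : List Bool) :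
    rpWeight pa pb s (true :: l) = (if s then pa else 1 - pb) * rpWeight pa pb true l := by
  show (if s then (if true then pa else 1 - pa) else (if true then 1 - pb else pb)) *
      rpWeight pa pb true l = _
  cases s <;> simp

lemma rpWeight_cons_false (pa pb : ℝ) (s : Bool) (l : List Bool) :
    rpWeight pa pb s (false :: l) = (if s then 1 - pa else pb) * rpWeight pa pb false l := by
  show (if s then (if false then pa else 1 - pa) else (if false then 1 - pb else pb)) *
      rpWeight pa pb false l = _
  cases s <;> simp

def listsLen : ℕ → Finset (List Bool)
  | 0 => {[]}
  | n+1 => (listsLen n).image (true :: ·) ∪ (listsLen n).image (false :: ·)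

lemma mem_listsLen : ∀ {n : ℕ} {g : List Bool}, g ∈ listsLen n ↔ g.length = n := by
  intro n
  induction n with
  | zero => intro g; simp [listsLen, List.length_eq_zero_iff]
  | succ n ih =>
    intro g
    cases g with
    | nil => simp [listsLen]
    | cons b l =>
      simp only [listsLen, Finset.mem_union, Finset.mem_image, List.length_cons,
        Nat.add_right_cancel_iff]
      constructor
      · rintro (⟨a, ha, heq⟩ | ⟨a, ha, heq⟩) <;>
          (injection heq with hb hl; subst hl; exact ih.mp ha)
      · intro hlen
        cases b
        · exact Or.inr ⟨l, ih.mpr hlen, rfl⟩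
        · exact Or.inl ⟨l, ih.mpr hlen, rfl⟩

def Ev (α β : ℕ) : Set (List Bool) := {g | rpScoreA g = α ∧ rpScoreB g = β ∧ rpLastA g}

lemma count_true_add_count_false (g : List Bool) : g.count true + g.count false = g.length := by
  induction g with
  | nil => rfl
  | cons b l ih => cases b <;> simp [List.count_cons] <;> omega

noncomputable def Fc (pa pb : ℝ) (s : Bool) (α β : ℕ) : ℝ :=
  ∑ g ∈ listsLen (α + β), Set.indicator (Ev α β) (rpWeight pa pb s) g

def Sx (x : ℝ) (α β : ℕ) : ℝ :=
  ∑ r ∈ Finset.Icc (min β 1) (min α β),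
    (α.choose r : ℝ) * ((β - 1).choose (r - 1) : ℝ) * x ^ r

def Tx (x : ℝ) (m n : ℕ) : ℝ :=
  ∑ r ∈ Finset.Icc 0 (min m n), (m.choose r : ℝ) * (n.choose r : ℝ) * x ^ r

lemma Sx_zero_right (x : ℝ) (α : ℕ) : Sx x α 0 = 1 := by simp [Sx]

lemma Tx_zero_right (x : ℝ) (m : ℕ) : Tx x m 0 = 1 := by simp [Tx]

lemma Tx_zero_left (x : ℝ) (n : ℕ) : Tx x 0 n = 1 := by simp [Tx]

lemma Sx_one_left (x : ℝ) {β : ℕ} (hβ : 1 ≤ β) : Sx x 1 β = x := by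
  rw [Sx, show min β 1 = 1 from by omega, show min 1 β = 1 from by omega]
  simp

lemma range_eq_Icc (N : ℕ) : Finset.range (N + 1) = Finset.Icc 0 N := by
  ext r; simp [Nat.lt_succ_iff]

lemma Sx_eq_range (x : ℝ) {α β : ℕ} (hβ : 1 ≤ β) {N : ℕ} (hN : min α β ≤ N) :
    Sx x α β = ∑ r ∈ Finset.range (N + 1),
      (if r = 0 then 0 else (α.choose r : ℝ) * ((β - 1).choose (r - 1) : ℝ)) * x ^ r := by
  rw [Sx, show min β 1 = 1 from by omega, range_eq_Icc]
  rw [← Finset.sum_subset (Finset.Icc_subset_Icc (Nat.zero_le 1) hN)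
    (by
      intro r h1 h2
      rcases Nat.eq_zero_or_pos r with h | h
      · simp [h]
      · rw [if_neg (by omega)]
        simp only [Finset.mem_Icc] at h1 h2
        have hr2 : min α β < r := by omega
        by_cases hα : α < r
        · simp [Nat.choose_eq_zero_of_lt hα]
        · have hb : β - 1 < r - 1 := by omega
          simp [Nat.choose_eq_zero_of_lt hb])]
  apply Finset.sum_congr rfl
  intro r hr
  have : r ≠ 0 := by simp only [Finset.mem_Icc] at hr; omega
  rw [if_neg this]

lemma Tx_eq_range (x : ℝ) {m n : ℕ} {N : ℕ} (hN : min m n ≤ N) :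
    Tx x m n = ∑ r ∈ Finset.range (N + 1), (m.choose r : ℝ) * (n.choose r : ℝ) * x ^ r := by
  rw [Tx, range_eq_Icc]
  apply Finset.sum_subset (Finset.Icc_subset_Icc (le_refl 0) hN)
  intro r h1 h2
  simp only [Finset.mem_Icc] at h1 h2
  have hr2 : min m n < r := by omega
  by_cases hm : m < r
  · simp [Nat.choose_eq_zero_of_lt hm]
  · have hn2 : n < r := by omega
    simp [Nat.choose_eq_zero_of_lt hn2]

lemma shift (x : ℝ) (a : ℕ → ℝ) (N : ℕ) :
    x * ∑ r ∈ Finset.range (N + 1), a r * x ^ r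
      = ∑ r ∈ Finset.range (N + 2), (if r = 0 then 0 else a (r - 1)) * x ^ r := by
  have h0 : (if (0 : ℕ) = 0 then (0 : ℝ) else a (0 - 1)) * x ^ 0 = 0 := by simp
  rw [Finset.sum_range_succ' (fun r => (if r = 0 then 0 else a (r - 1)) * x ^ r) (N + 1), h0,
    add_zero, Finset.mul_sum]
  apply Finset.sum_congr rfl
  intro r _
  simp only [Nat.succ_ne_zero, if_false, Nat.add_sub_cancel]
  ring

lemma key1 (x : ℝ) {α β : ℕ} (hα : 2 ≤ α) (hβ : 1 ≤ β) :
    Sx x α β = Sx x (α - 1) β + x * Tx x (α - 1) (β - 1) := by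
  set N := α + β with hNdef
  rw [Sx_eq_range x hβ (N := N) (by omega),
      Sx_eq_range x hβ (α := α - 1) (N := N) (by omega),
      Tx_eq_range x (m := α - 1) (n := β - 1) (N := N - 1) (by omega), shift,
      show N - 1 + 2 = N + 1 from by omega, ← Finset.sum_add_distrib]
  apply Finset.sum_congr rfl
  intro r _
  rcases r with _ | k
  · simp
  · simp only [Nat.succ_ne_zero, if_false, Nat.add_sub_cancel]
    have hch : α.choose (k + 1) = (α - 1).choose k + (α - 1).choose (k + 1) := by
      conv_lhs => rw [show α = α - 1 + 1 from by omega]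
      exact Nat.choose_succ_succ' _ _
    rw [hch]; push_cast; ring

lemma key2 (x : ℝ) {m n : ℕ} (hn : 1 ≤ n) :
    Tx x m n = Sx x m n + Tx x m (n - 1) := by
  set N := m + n with hNdef
  rw [Tx_eq_range x (N := N) (by omega), Sx_eq_range x hn (N := N) (by omega),
      Tx_eq_range x (n := n - 1) (N := N) (by omega), ← Finset.sum_add_distrib]
  apply Finset.sum_congr rfl
  intro r _
  rcases r with _ | k
  · simp
  · simp only [Nat.succ_ne_zero, if_false, Nat.add_sub_cancel]
    have hch : n.choose (k + 1) = (n - 1).choose k + (n - 1).choose (k + 1) := by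
      conv_lhs => rw [show n = n - 1 + 1 from by omega]
      exact Nat.choose_succ_succ' _ _
    rw [hch]; push_cast; ring

lemma getLast?_cons_ne (b : Bool) {l : List Bool} (h : l ≠ []) :
    (b :: l).getLast? = l.getLast? := by
  cases l with
  | nil => exact absurd rfl h
  | cons c m => exact List.getLast?_cons_cons

lemma ind_cons_true (pa pb : ℝ) (s : Bool) (α β : ℕ) {l : List Bool} (hl : l ≠ []) :
    Set.indicator (Ev α β) (rpWeight pa pb s) (true :: l)
      = (if s then pa else 1 - pb) *
        (if α = 0 then 0 else Set.indicator (Ev (α - 1) β) (rpWeight pa pb true) l) := by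
  by_cases h : (true :: l) ∈ Ev α β
  · have hmem1 := h
    obtain ⟨h1, h2, h3⟩ := h
    simp only [rpScoreA, List.count_cons] at h1
    simp only [rpScoreB, List.count_cons] at h2
    simp only [rpLastA, getLast?_cons_ne _ hl] at h3
    simp at h1 h2
    have hα : α ≠ 0 := by omega
    have hmem : l ∈ Ev (α - 1) β := by
      refine ⟨?_, ?_, h3⟩
      · show l.count true = α - 1; omega
      · exact h2
    rw [Set.indicator_of_mem hmem1, if_neg hα, Set.indicator_of_mem hmem,
      rpWeight_cons_true]
  · rw [Set.indicator_of_notMem h]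
    by_cases hα : α = 0
    · simp [hα]
    · rw [if_neg hα]
      suffices hns : l ∉ Ev (α - 1) β by rw [Set.indicator_of_notMem hns, mul_zero]
      intro hm
      obtain ⟨h1, h2, h3⟩ := hm
      apply h
      refine ⟨?_, ?_, ?_⟩
      · show (true :: l).count true = α
        simp only [List.count_cons]
        have : l.count true = α - 1 := h1
        simp; omega
      · show (true :: l).count false = β
        simp only [List.count_cons]
        have : l.count false = β := h2
        simpa using this
      · show (true :: l).getLast? = some true
        rw [getLast?_cons_ne _ hl]; exact h3

lemma ind_cons_false (pa pb : ℝ) (s : Bool) (α β : ℕ) {l : List Bool} (hl : l ≠ []) :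
    Set.indicator (Ev α β) (rpWeight pa pb s) (false :: l)
      = (if s then 1 - pa else pb) *
        (if β = 0 then 0 else Set.indicator (Ev α (β - 1)) (rpWeight pa pb false) l) := by
  by_cases h : (false :: l) ∈ Ev α β
  · have hmem1 := h
    obtain ⟨h1, h2, h3⟩ := h
    simp only [rpScoreA, List.count_cons] at h1
    simp only [rpScoreB, List.count_cons] at h2
    simp only [rpLastA, getLast?_cons_ne _ hl] at h3
    simp at h1 h2
    have hβ : β ≠ 0 := by omega
    have hmem : l ∈ Ev α (β - 1) := by
      refine ⟨h1, ?_, h3⟩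
      show l.count false = β - 1; omega
    rw [Set.indicator_of_mem hmem1, if_neg hβ, Set.indicator_of_mem hmem,
      rpWeight_cons_false]
  · rw [Set.indicator_of_notMem h]
    by_cases hβ : β = 0
    · simp [hβ]
    · rw [if_neg hβ]
      suffices hns : l ∉ Ev α (β - 1) by rw [Set.indicator_of_notMem hns, mul_zero]
      intro hm
      obtain ⟨h1, h2, h3⟩ := hm
      apply h
      refine ⟨?_, ?_, ?_⟩
      · show (false :: l).count true = α
        simp only [List.count_cons]
        have : l.count true = α := h1
        simpa using this
      · show (false :: l).count false = β
        simp only [List.count_cons]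
        have : l.count false = β - 1 := h2
        simp; omega
      · show (false :: l).getLast? = some true
        rw [getLast?_cons_ne _ hl]; exact h3

lemma Fc_succ (pa pb : ℝ) (s : Bool) (α β n : ℕ) (hn : α + β = n + 2) :
    Fc pa pb s α β
      = (if s then pa else 1 - pb) * (if α = 0 then 0 else Fc pa pb true (α - 1) β)
      + (if s then 1 - pa else pb) * (if β = 0 then 0 else Fc pa pb false α (β - 1)) := by
  have hdisj : Disjoint ((listsLen (n + 1)).image (true :: ·))
      ((listsLen (n + 1)).image (false :: ·)) := by
    rw [Finset.disjoint_left]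
    intro g hg1 hg2
    simp only [Finset.mem_image] at hg1 hg2
    obtain ⟨a, -, rfl⟩ := hg1
    obtain ⟨b, -, hb⟩ := hg2
    simp at hb
  have hinj1 : Set.InjOn (true :: ·) (listsLen (n + 1)) := fun a _ b _ h =>
    List.tail_eq_of_cons_eq h
  have hinj2 : Set.InjOn (false :: ·) (listsLen (n + 1)) := fun a _ b _ h =>
    List.tail_eq_of_cons_eq h
  rw [Fc, hn, show (n + 2) = (n + 1) + 1 from rfl]
  rw [show listsLen ((n + 1) + 1)
      = (listsLen (n + 1)).image (true :: ·) ∪ (listsLen (n + 1)).image (false :: ·) from rfl]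
  rw [Finset.sum_union hdisj, Finset.sum_image hinj1, Finset.sum_image hinj2]
  have hne : ∀ l ∈ listsLen (n + 1), l ≠ [] := by
    intro l hl hnil
    rw [mem_listsLen] at hl
    simp [hnil] at hl
  rw [Finset.sum_congr rfl (fun l hl => ind_cons_true pa pb s α β (hne l hl)),
      Finset.sum_congr rfl (fun l hl => ind_cons_false pa pb s α β (hne l hl)),
      ← Finset.mul_sum, ← Finset.mul_sum]
  congr 1
  · congr 1
    by_cases hα : α = 0
    · simp [hα]
    · simp only [if_neg hα]
      rw [Fc, show α - 1 + β = n + 1 from by omega]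
  · congr 1
    by_cases hβ : β = 0
    · simp [hβ]
    · simp only [if_neg hβ]
      rw [Fc, show α + (β - 1) = n + 1 from by omega]

end Stmt13

namespace Stmt13

lemma Fc_zero_zero (pa pb : ℝ) (s : Bool) : Fc pa pb s 0 0 = 0 := by
  rw [Fc]
  show ∑ g ∈ ({[]} : Finset (List Bool)), _ = 0
  rw [Finset.sum_singleton, Set.indicator_of_notMem]
  intro h
  exact absurd h.2.2 (by simp [rpLastA])

lemma listsLen_one : listsLen 1 = {[true], [false]} := rfl

lemma Fc_one_zero (pa pb : ℝ) (s : Bool) : Fc pa pb s 1 0 = if s then pa else 1 - pb := by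
  rw [Fc]
  rw [show (1 + 0 : ℕ) = 1 from rfl, listsLen_one,
    Finset.sum_pair (by simp : ([true] : List Bool) ≠ [false])]
  rw [Set.indicator_of_mem (show [true] ∈ Ev 1 0 from ⟨rfl, rfl, rfl⟩),
    Set.indicator_of_notMem (show [false] ∉ Ev 1 0 from fun h => by
      simpa [rpLastA] using h.2.2)]
  rw [rpWeight_cons_true, add_zero, show rpWeight pa pb true [] = 1 from rfl, mul_one]

lemma Fc_zero_one (pa pb : ℝ) (s : Bool) : Fc pa pb s 0 1 = 0 := by
  rw [Fc]
  rw [show (0 + 1 : ℕ) = 1 from rfl, listsLen_one,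
    Finset.sum_pair (by simp : ([true] : List Bool) ≠ [false])]
  rw [Set.indicator_of_notMem (show [true] ∉ Ev 0 1 from fun h => by
      simpa [rpScoreA] using h.1),
    Set.indicator_of_notMem (show [false] ∉ Ev 0 1 from fun h => by
      simpa [rpLastA] using h.2.2)]
  ring

lemma main (pa pb : ℝ) (hpa : pa ≠ 0) (hpb : pb ≠ 0) :
    ∀ n α β, α + β = n →
      Fc pa pb true α β
          = (if α = 0 then 0 else pa ^ α * pb ^ β * Sx ((1 - pa) / pa * ((1 - pb) / pb)) α β)
        ∧ Fc pa pb false α β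
          = (if α = 0 then 0
             else (1 - pb) * pa ^ (α - 1) * pb ^ β *
               Tx ((1 - pa) / pa * ((1 - pb) / pb)) (α - 1) β) := by
  set x := (1 - pa) / pa * ((1 - pb) / pb) with hx
  have hpx : pa * pb * x = (1 - pa) * (1 - pb) := by
    rw [hx]; field_simp
  intro n
  induction n with
  | zero =>
    intro α β h
    obtain rfl : α = 0 := by omega
    obtain rfl : β = 0 := by omega
    simp [Fc_zero_zero]
  | succ n ih =>
    rcases n with _ | m
    · intro α β h
      have hcase : (α = 1 ∧ β = 0) ∨ (α = 0 ∧ β = 1) := by omega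
      rcases hcase with ⟨rfl, rfl⟩ | ⟨rfl, rfl⟩
      · constructor
        · rw [Fc_one_zero]; simp [Sx_zero_right]
        · rw [Fc_one_zero]; simp [Tx_zero_left]
      · constructor <;> rw [Fc_zero_one] <;> simp
    · intro α β h
      have hT : Fc pa pb true α β
          = pa * (if α = 0 then 0 else Fc pa pb true (α - 1) β)
            + (1 - pa) * (if β = 0 then 0 else Fc pa pb false α (β - 1)) := by
        simpa using Fc_succ pa pb true α β m h
      have hF : Fc pa pb false α β
          = (1 - pb) * (if α = 0 then 0 else Fc pa pb true (α - 1) β)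
            + pb * (if β = 0 then 0 else Fc pa pb false α (β - 1)) := by
        simpa using Fc_succ pa pb false α β m h
      by_cases hα : α = 0
      · subst hα
        have hB0 : Fc pa pb false 0 (β - 1) = 0 := by
          simpa using (ih 0 (β - 1) (by omega)).2
        refine ⟨?_, ?_⟩
        · rw [hT]; simp [hB0]
        · rw [hF]; simp [hB0]
      · by_cases hβ : β = 0
        · subst hβ
          have hA' : Fc pa pb true (α - 1) 0
              = pa ^ (α - 1) * pb ^ 0 * Sx x (α - 1) 0 := by
            rw [(ih (α - 1) 0 (by omega)).1, if_neg (by omega)]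
          have hpowa : pa ^ α = pa ^ (α - 1) * pa := by
            conv_lhs => rw [show α = α - 1 + 1 from by omega]
            rw [pow_succ]
          have hT' : Fc pa pb true α 0 = pa * Fc pa pb true (α - 1) 0 := by
            rw [hT, if_neg hα]; norm_num
          have hF' : Fc pa pb false α 0 = (1 - pb) * Fc pa pb true (α - 1) 0 := by
            rw [hF, if_neg hα]; norm_num
          constructor
          · rw [hT', if_neg hα, hA', hpowa, Sx_zero_right, Sx_zero_right]
            ring
          · rw [hF', if_neg hα, hA', Sx_zero_right, Tx_zero_right]
            ring
        · by_cases hα1 : α = 1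
          · subst hα1
            have hA0 : Fc pa pb true 0 β = 0 := by
              simpa using (ih 0 β (by omega)).1
            have hB1 : Fc pa pb false 1 (β - 1)
                = (1 - pb) * pa ^ 0 * pb ^ (β - 1) * Tx x 0 (β - 1) := by
              rw [(ih 1 (β - 1) (by omega)).2, if_neg one_ne_zero]
            have hpowb : pb ^ β = pb ^ (β - 1) * pb := by
              conv_lhs => rw [show β = β - 1 + 1 from by omega]
              rw [pow_succ]
            have h10 : (1 : ℕ) ≠ 0 := one_ne_zero
            have hT' : Fc pa pb true 1 β
                = pa * Fc pa pb true 0 β + (1 - pa) * Fc pa pb false 1 (β - 1) := by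
              rw [hT, if_neg hβ, if_neg h10]
            have hF' : Fc pa pb false 1 β
                = (1 - pb) * Fc pa pb true 0 β + pb * Fc pa pb false 1 (β - 1) := by
              rw [hF, if_neg hβ, if_neg h10]
            constructor
            · rw [hT', hA0, hB1, if_neg h10, Sx_one_left x (by omega), Tx_zero_left,
                hpowb, pow_one]
              linear_combination (-(pb ^ (β - 1))) * hpx
            · rw [hF', hA0, hB1, if_neg h10, Tx_zero_left, Tx_zero_left, hpowb]
              ring
          · have hα2 : 2 ≤ α := by omega
            have hA' : Fc pa pb true (α - 1) β
                = pa ^ (α - 1) * pb ^ β * Sx x (α - 1) β := by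
              rw [(ih (α - 1) β (by omega)).1, if_neg (by omega)]
            have hB' : Fc pa pb false α (β - 1)
                = (1 - pb) * pa ^ (α - 1) * pb ^ (β - 1) * Tx x (α - 1) (β - 1) := by
              rw [(ih α (β - 1) (by omega)).2, if_neg hα]
            have hpowa : pa ^ α = pa ^ (α - 1) * pa := by
              conv_lhs => rw [show α = α - 1 + 1 from by omega]
              rw [pow_succ]
            have hpowb : pb ^ β = pb ^ (β - 1) * pb := by
              conv_lhs => rw [show β = β - 1 + 1 from by omega]
              rw [pow_succ]
            constructor
            · rw [hT]
              simp only [if_neg hα, if_neg hβ]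
              rw [hA', hB', key1 x hα2 (by omega), hpowa, hpowb]
              linear_combination (-(pa ^ (α - 1) * pb ^ (β - 1) * Tx x (α - 1) (β - 1))) * hpx
            · rw [hF]
              simp only [if_neg hα, if_neg hβ]
              rw [hA', hB', key2 x (m := α - 1) (n := β) (by omega), hpowb]
              ring

end Stmt13


theorem stmt_13 (α β : ℕ) (hα : 1 ≤ α) (pa pb : ℝ) (hpa0 : 0 < pa) (hpa1 : pa ≤ 1)
    (hpb0 : 0 < pb) (hpb1 : pb ≤ 1) :
    rpPr pa pb {g : List Bool | rpScoreA g = α ∧ rpScoreB g = β ∧ rpLastA g} =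
      pa ^ α * pb ^ β *
        ∑ r ∈ Finset.Icc (min β 1) (min α β),
          (α.choose r : ℝ) * ((β - 1).choose (r - 1) : ℝ) *
            ((1 - pa) / pa * ((1 - pb) / pb)) ^ r := by

  have h1 : rpPr pa pb {g : List Bool | rpScoreA g = α ∧ rpScoreB g = β ∧ rpLastA g}
      = Stmt13.Fc pa pb true α β := by
    rw [rpPr, Stmt13.Fc]
    apply tsum_eq_sum
    intro g hg
    apply Set.indicator_of_notMem
    intro hmem
    obtain ⟨h1, h2, h3⟩ := hmem
    apply hg
    rw [Stmt13.mem_listsLen]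
    have hc := Stmt13.count_true_add_count_false g
    have ha : g.count true = α := h1
    have hb : g.count false = β := h2
    omega
  rw [h1, ((Stmt13.main pa pb (ne_of_gt hpa0) (ne_of_gt hpb0)) (α + β) α β rfl).1,
    if_neg (by omega)]
  rfl
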